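/- Let H be a separable Hilbert space with fixed orthonormal basis and C a compact Hermitian operator. Then the distance from C to the bounded real diagonal operators equals its distance to the compact real diagonal operators: inf_{D ∈ D(B(H))^h} ‖C + D‖ = inf_{D ∈ D(K(H))^h} ‖C + D‖. -/

import Mathlib

open scoped InnerProductSpace
open ContinuousLinearMap

noncomputable section

variable {H : Type*} [NormedAddCommGroup H] [InnerProductSpace ℂ H] [CompleteSpace H]

/-- The absolute value `|A| = (A^*A)^{1/2}` of an operator. -/
def opAbs (A : H →L[ℂ] H) : H →L[ℂ] H := CFC.sqrt (ContinuousLinearMap.adjoint A * A)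

/-- The trace of an operator computed in the Hilbert basis `e`. -/
def opTrace (e : HilbertBasis ℕ ℂ H) (A : H →L[ℂ] H) : ℂ := ∑' n, ⟪e n, A (e n)⟫_ℂ

/-- The trace norm `‖A‖₁ = tr |A|` computed in the Hilbert basis `e`. -/
def traceNorm (e : HilbertBasis ℕ ℂ H) (A : H →L[ℂ] H) : ℝ :=
  ∑' n, (⟪e n, opAbs A (e n)⟫_ℂ).re

/-- `A` is trace class: the diagonal of `|A|` is summable. -/
def IsTraceClass (e : HilbertBasis ℕ ℂ H) (A : H →L[ℂ] H) : Prop :=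
  Summable fun n => (⟪e n, opAbs A (e n)⟫_ℂ).re

/-- `D` is diagonal in the basis `e` with real diagonal entries. -/
def RealDiag (e : HilbertBasis ℕ ℂ H) (D : H →L[ℂ] H) : Prop :=
  ∀ n, ∃ d : ℝ, D (e n) = (d : ℂ) • e n

/-- Distance from `C` to the compact real diagonal operators, in operator norm. -/
def diagDistK (e : HilbertBasis ℕ ℂ H) (C : H →L[ℂ] H) : ℝ :=
  ⨅ D : {D : H →L[ℂ] H // IsCompactOperator ⇑D ∧ RealDiag e D}, ‖C + (D : H →L[ℂ] H)‖

/-- Positive part `X⁺ = (|X| + X)/2`. -/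
def opPosPart (X : H →L[ℂ] H) : H →L[ℂ] H := (2⁻¹ : ℂ) • (opAbs X + X)

/-- Negative part `X⁻ = (|X| - X)/2`. -/
def opNegPart (X : H →L[ℂ] H) : H →L[ℂ] H := (2⁻¹ : ℂ) • (opAbs X - X)

section Aux

open Filter Metric Submodule Topology

/-- Span of the first `N` basis vectors. -/
def spanN (e : HilbertBasis ℕ ℂ H) (N : ℕ) : Submodule ℂ H :=
  Submodule.span ℂ (⇑e '' Set.Iio N)

instance spanN_fd (e : HilbertBasis ℕ ℂ H) (N : ℕ) : FiniteDimensional ℂ (spanN e N) :=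
  FiniteDimensional.span_of_finite ℂ ((Set.finite_Iio N).image _)

instance spanN_complete (e : HilbertBasis ℕ ℂ H) (N : ℕ) : CompleteSpace (spanN e N) :=
  FiniteDimensional.complete ℂ _

/-- Orthogonal projection onto `spanN e N` as an operator on `H`. -/
def projN (e : HilbertBasis ℕ ℂ H) (N : ℕ) : H →L[ℂ] H :=
  (spanN e N).subtypeL ∘L orthogonalProjection (spanN e N)

lemma projN_sa (e : HilbertBasis ℕ ℂ H) (N : ℕ) : IsSelfAdjoint (projN e N) :=
  isSelfAdjoint_starProjection (spanN e N)

lemma norm_projN_apply_le (e : HilbertBasis ℕ ℂ H) (N : ℕ) (x : H) :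
    ‖projN e N x‖ ≤ ‖x‖ := by
  have h := (orthogonalProjection (spanN e N)).le_opNorm x
  have h2 : ‖orthogonalProjection (spanN e N)‖ ≤ 1 := orthogonalProjection_norm_le _
  calc ‖projN e N x‖ = ‖orthogonalProjection (spanN e N) x‖ := rfl
    _ ≤ ‖orthogonalProjection (spanN e N)‖ * ‖x‖ := h
    _ ≤ 1 * ‖x‖ := mul_le_mul_of_nonneg_right h2 (norm_nonneg x)
    _ = ‖x‖ := one_mul _

lemma norm_projN_le (e : HilbertBasis ℕ ℂ H) (N : ℕ) : ‖projN e N‖ ≤ 1 :=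
  ContinuousLinearMap.opNorm_le_bound _ zero_le_one fun x => by
    simpa using norm_projN_apply_le e N x

lemma norm_sub_projN_apply_le (e : HilbertBasis ℕ ℂ H) (N : ℕ) (x : H) :
    ‖x - projN e N x‖ ≤ ‖x‖ := by
  have hx : x - projN e N x = (orthogonalProjection (spanN e N)ᗮ x : H) :=
    (Submodule.starProjection_orthogonal_val (K := spanN e N) x).symm
  rw [hx]
  have h := (orthogonalProjection (spanN e N)ᗮ).le_opNorm x
  have h2 : ‖orthogonalProjection (spanN e N)ᗮ‖ ≤ 1 := orthogonalProjection_norm_le _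
  calc ‖(orthogonalProjection (spanN e N)ᗮ x : H)‖
      ≤ ‖orthogonalProjection (spanN e N)ᗮ‖ * ‖x‖ := h
    _ ≤ 1 * ‖x‖ := mul_le_mul_of_nonneg_right h2 (norm_nonneg x)
    _ = ‖x‖ := one_mul _

lemma tendsto_norm_sub_projN (e : HilbertBasis ℕ ℂ H) (x : H) :
    Tendsto (fun N => ‖x - projN e N x‖) atTop (𝓝 0) := by
  have hmem : ∀ N : ℕ, (∑ i ∈ Finset.range N, e.repr x i • e i) ∈ spanN e N := by
    intro N
    refine Submodule.sum_mem _ fun i hi => Submodule.smul_mem _ _ ?_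
    exact Submodule.subset_span ⟨i, Finset.mem_range.mp hi, rfl⟩
  have hmin : ∀ N : ℕ, ‖x - projN e N x‖ ≤ ‖x - ∑ i ∈ Finset.range N, e.repr x i • e i‖ := by
    intro N
    have h1 : ‖x - projN e N x‖ = ⨅ v : spanN e N, ‖x - v‖ := Submodule.starProjection_minimal (U := spanN e N) x
    rw [h1]
    exact ciInf_le ⟨0, fun r ⟨v, hv⟩ => hv ▸ norm_nonneg _⟩
      (⟨_, hmem N⟩ : spanN e N)
  have hsum : Tendsto (fun N => ∑ i ∈ Finset.range N, e.repr x i • e i) atTop (𝓝 x) :=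
    (e.hasSum_repr x).tendsto_sum_nat
  have hnorm : Tendsto (fun N => ‖x - ∑ i ∈ Finset.range N, e.repr x i • e i‖) atTop (𝓝 0) := by
    have := (tendsto_const_nhds (x := x)).sub hsum
    rw [sub_self] at this
    simpa using this.norm
  exact squeeze_zero (fun N => norm_nonneg _) hmin hnorm

lemma projN_compact (e : HilbertBasis ℕ ℂ H) (N : ℕ) : IsCompactOperator ⇑(projN e N) := by
  refine ⟨Subtype.val '' Metric.closedBall (0 : spanN e N) 1, ?_, ?_⟩
  · exact (isCompact_closedBall _ _).image continuous_subtype_val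
  · refine Filter.mem_of_superset (Metric.ball_mem_nhds 0 one_pos) fun x hx => ?_
    refine ⟨orthogonalProjection (spanN e N) x, ?_, rfl⟩
    rw [Metric.mem_closedBall, dist_zero_right]
    calc ‖orthogonalProjection (spanN e N) x‖ = ‖projN e N x‖ := rfl
      _ ≤ ‖x‖ := norm_projN_apply_le e N x
      _ ≤ 1 := le_of_lt (by simpa using hx)

/-- Key compactness estimate: `‖(1 - P_N) C‖ → 0`. -/
lemma exists_projN_comp_small (e : HilbertBasis ℕ ℂ H) (C : H →L[ℂ] H)
    (hcomp : IsCompactOperator ⇑C) {ε : ℝ} (hε : 0 < ε) :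
    ∃ N : ℕ, ‖C - (projN e N) ∘L C‖ ≤ 2 * ε := by
  obtain ⟨K, hK, hKsub⟩ := hcomp.image_subset_compact_of_bounded
    (Bornology.IsBounded.subset (Metric.isBounded_closedBall (x := (0:H)) (r := 1)) le_rfl)
  obtain ⟨t, htfin, htcover⟩ := (totallyBounded_iff.mp hK.totallyBounded) ε hε
  -- choose N such that for all y in t, ‖y - P_N y‖ < ε
  have hy : ∀ᶠ N : ℕ in atTop, ∀ y ∈ t, ‖y - projN e N y‖ < ε := by
    rw [htfin.eventually_all]
    intro y _
    exact (tendsto_norm_sub_projN e y).eventually_lt_const hε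
  obtain ⟨N, hN⟩ := hy.exists
  refine ⟨N, ContinuousLinearMap.opNorm_le_bound _ (by positivity) fun x => ?_⟩
  rcases eq_or_ne x 0 with rfl | hx0
  · simp
  · set u : H := (‖x‖⁻¹ : ℂ) • x with hu
    have hxnorm : (0:ℝ) < ‖x‖ := norm_pos_iff.mpr hx0
    have hunorm : ‖u‖ = 1 := by
      rw [hu, norm_smul]
      simp [norm_inv, abs_of_nonneg (norm_nonneg x), inv_mul_cancel₀ hxnorm.ne']
    have hCu : C u ∈ K := hKsub ⟨u, by simp [Metric.mem_closedBall, hunorm], rfl⟩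
    obtain ⟨y, hyt, hyball⟩ := by
      have := htcover hCu
      simpa using this
    have hdist : ‖C u - y‖ < ε := by
      rw [← dist_eq_norm]
      exact hyball
    have key : ‖C u - projN e N (C u)‖ ≤ 2 * ε := by
      have h1 : C u - projN e N (C u) =
          ((C u - y) - projN e N (C u - y)) + (y - projN e N y) := by
        simp only [map_sub]; abel
      calc ‖C u - projN e N (C u)‖
          ≤ ‖(C u - y) - projN e N (C u - y)‖ + ‖y - projN e N y‖ := by
            rw [h1]; exact norm_add_le _ _
        _ ≤ ‖C u - y‖ + ε := add_le_add (norm_sub_projN_apply_le e N _)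
            (le_of_lt (hN y hyt))
        _ ≤ ε + ε := add_le_add (le_of_lt hdist) le_rfl
        _ = 2 * ε := by ring
    have hxu : x = (‖x‖ : ℂ) • u := by
      rw [hu, smul_smul]
      rw [mul_inv_cancel₀ (by exact_mod_cast hxnorm.ne')]
      simp
    calc ‖(C - projN e N ∘L C) x‖ = ‖(C - projN e N ∘L C) ((‖x‖ : ℂ) • u)‖ := by rw [← hxu]
      _ = ‖x‖ * ‖(C - projN e N ∘L C) u‖ := by
          rw [map_smul, norm_smul, Complex.norm_real, Real.norm_eq_abs,
            abs_of_nonneg (norm_nonneg x)]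
      _ = ‖x‖ * ‖C u - projN e N (C u)‖ := rfl
      _ ≤ ‖x‖ * (2 * ε) := mul_le_mul_of_nonneg_left key (norm_nonneg x)
      _ = 2 * ε * ‖x‖ := by ring

end Aux

/-- the distance from a compact Hermitian operator to the bounded real
diagonals equals its distance to the compact real diagonals. -/
theorem stmt_10 (e : HilbertBasis ℕ ℂ H) (C : H →L[ℂ] H)
    (hcomp : IsCompactOperator ⇑C) (hsa : IsSelfAdjoint C) :
    (⨅ D : {D : H →L[ℂ] H // RealDiag e D}, ‖C + (D : H →L[ℂ] H)‖) = diagDistK e C := by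
  classical
  haveI hne : Nonempty {D : H →L[ℂ] H // RealDiag e D} :=
    ⟨⟨0, fun n => ⟨0, by simp⟩⟩⟩
  haveI hneK : Nonempty {D : H →L[ℂ] H // IsCompactOperator ⇑D ∧ RealDiag e D} :=
    ⟨⟨0, isCompactOperator_zero, fun n => ⟨0, by simp⟩⟩⟩
  have hbdd : BddBelow (Set.range fun D : {D : H →L[ℂ] H // RealDiag e D} =>
      ‖C + (D : H →L[ℂ] H)‖) := ⟨0, fun r ⟨v, hv⟩ => hv ▸ norm_nonneg _⟩
  have hbddK : BddBelow (Set.range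
      fun D : {D : H →L[ℂ] H // IsCompactOperator ⇑D ∧ RealDiag e D} =>
      ‖C + (D : H →L[ℂ] H)‖) := ⟨0, fun r ⟨v, hv⟩ => hv ▸ norm_nonneg _⟩
  apply le_antisymm
  · -- the infimum over a larger set is smaller
    refine le_ciInf fun D => ?_
    exact ciInf_le hbdd (⟨D.1, D.2.2⟩ : {D : H →L[ℂ] H // RealDiag e D})
  · -- the hard direction: approximate any bounded diagonal by a compact one
    refine le_ciInf fun D => ?_
    refine le_of_forall_pos_le_add fun ε hε => ?_
    obtain ⟨N, hN⟩ := exists_projN_comp_small e C hcomp (show (0:ℝ) < ε/4 by linarith)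
    have hN' : ‖C - projN e N ∘L C‖ ≤ ε/2 := by linarith
    set P := projN e N with hP
    set D₀ : H →L[ℂ] H := (D : H →L[ℂ] H) with hD₀
    set D' : H →L[ℂ] H := P ∘L (D₀ ∘L P) with hD'
    -- D' is compact
    have hD'c : IsCompactOperator ⇑D' := by
      have h := (projN_compact e N).comp_clm (D₀ ∘L P)
      rwa [hD', ContinuousLinearMap.coe_comp']
    -- key facts about P on basis vectors
    have hPlt : ∀ n, n < N → P (e n) = e n := by
      intro n hn
      have hmem : e n ∈ spanN e N := Submodule.subset_span ⟨n, hn, rfl⟩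
      exact (Submodule.starProjection_eq_self_iff (K := spanN e N)).mpr hmem
    have hPge : ∀ n, N ≤ n → P (e n) = 0 := by
      intro n hn
      have hmem : e n ∈ (spanN e N)ᗮ := by
        rw [Submodule.mem_orthogonal]
        intro u hu
        induction hu using Submodule.span_induction with
        | mem u hu =>
            obtain ⟨i, hi, rfl⟩ := hu
            have hiN : i < N := hi
            exact e.orthonormal.2 (by omega)
        | zero => simp
        | add u v _ _ hu hv => rw [inner_add_left, hu, hv, add_zero]
        | smul c u _ hu => rw [inner_smul_left, hu, mul_zero]
      have h0 : Submodule.orthogonalProjectionOnto (spanN e N) (e n) = 0 :=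
        Submodule.orthogonalProjectionOnto_apply_of_mem_orthogonal hmem
      show ((spanN e N).subtypeL ∘L Submodule.orthogonalProjectionOnto (spanN e N)) (e n) = 0
      simp [h0]
    -- D' is a real diagonal
    have hD'd : RealDiag e D' := by
      intro n
      rcases lt_or_ge n N with hn | hn
      · obtain ⟨d, hd⟩ := D.2 n
        refine ⟨d, ?_⟩
        have : D' (e n) = P (D₀ (P (e n))) := rfl
        rw [this, hPlt n hn, hd, map_smul, hPlt n hn]
      · refine ⟨0, ?_⟩
        have : D' (e n) = P (D₀ (P (e n))) := rfl
        rw [this, hPge n hn]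
        simp
    -- norm estimates
    have hPnorm : ‖P‖ ≤ 1 := norm_projN_le e N
    have h1 : ‖P ∘L ((C + D₀) ∘L P)‖ ≤ ‖C + D₀‖ := by
      have a1 : ‖P ∘L ((C + D₀) ∘L P)‖ ≤ ‖P‖ * (‖C + D₀‖ * ‖P‖) :=
        le_trans (ContinuousLinearMap.opNorm_comp_le _ _)
          (by gcongr; exact ContinuousLinearMap.opNorm_comp_le _ _)
      have hb : (0:ℝ) ≤ ‖C + D₀‖ := norm_nonneg _
      have hp0 : (0:ℝ) ≤ ‖P‖ := norm_nonneg _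
      calc ‖P ∘L ((C + D₀) ∘L P)‖ ≤ ‖P‖ * (‖C + D₀‖ * ‖P‖) := a1
        _ = (‖P‖ * ‖P‖) * ‖C + D₀‖ := by ring
        _ ≤ 1 * ‖C + D₀‖ :=
            mul_le_mul_of_nonneg_right (mul_le_one₀ hPnorm hp0 hPnorm) hb
        _ = ‖C + D₀‖ := one_mul _
    have hcp : ‖C - C ∘L P‖ ≤ ε/2 := by
      have hadj : ContinuousLinearMap.adjoint (C - C ∘L P) = C - P ∘L C := by
        rw [map_sub, ContinuousLinearMap.adjoint_comp, hsa.adjoint_eq,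
          (projN_sa e N).adjoint_eq]
      calc ‖C - C ∘L P‖ = ‖ContinuousLinearMap.adjoint (C - C ∘L P)‖ :=
            (ContinuousLinearMap.adjoint.norm_map _).symm
        _ = ‖C - P ∘L C‖ := by rw [hadj]
        _ ≤ ε/2 := hN'
    have h2 : ‖C - P ∘L (C ∘L P)‖ ≤ ε := by
      have hsplit : C - P ∘L (C ∘L P) = (C - P ∘L C) + P ∘L (C - C ∘L P) := by
        rw [ContinuousLinearMap.comp_sub]
        abel
      calc ‖C - P ∘L (C ∘L P)‖ ≤ ‖C - P ∘L C‖ + ‖P ∘L (C - C ∘L P)‖ := by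
            rw [hsplit]; exact norm_add_le _ _
        _ ≤ ε/2 + ‖P‖ * ‖C - C ∘L P‖ :=
            add_le_add hN' (ContinuousLinearMap.opNorm_comp_le _ _)
        _ ≤ ε/2 + 1 * (ε/2) := by
            refine add_le_add le_rfl (mul_le_mul hPnorm hcp (norm_nonneg _) zero_le_one)
        _ = ε := by ring
    -- put things together
    have hsplit2 : C + D' = P ∘L ((C + D₀) ∘L P) + (C - P ∘L (C ∘L P)) := by
      rw [ContinuousLinearMap.add_comp, ContinuousLinearMap.comp_add]
      abel
    have hfinal : ‖C + D'‖ ≤ ‖C + D₀‖ + ε := by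
      calc ‖C + D'‖ ≤ ‖P ∘L ((C + D₀) ∘L P)‖ + ‖C - P ∘L (C ∘L P)‖ := by
            rw [hsplit2]; exact norm_add_le _ _
        _ ≤ ‖C + D₀‖ + ε := add_le_add h1 h2
    calc diagDistK e C ≤ ‖C + D'‖ :=
          ciInf_le hbddK
            (⟨D', hD'c, hD'd⟩ : {D : H →L[ℂ] H // IsCompactOperator ⇑D ∧ RealDiag e D})
      _ ≤ ‖C + D₀‖ + ε := hfinal
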